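/- Let F be a field and N, N_E natural numbers with N_E ≤ N. Let A be an (N−N_E)×N matrix over F with rank N−N_E such that every nonzero vector in the row span of A has Hamming weight at least N_E+1. Let ι : Fin N_E → Fin N be injective and let A_E be the N_E×N matrix whose i-th row is the standard basis vector e_{ι(i)}. Then the linear map x ↦ (A·x, A_E·x) from F^N to F^{N−N_E} × F^{N_E} is bijective; equivalently, for every pair (y, w) ∈ F^{N−N_E} × F^{N_E} there is exactly one x ∈ F^N with A·x = y and A_E·x = w. -/

import Mathlib

open Submodule Set


/-- Let `F` be a field and `N_E ≤ N`. Let `A` be an `(N - N_E) × N` matrix over `F`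
with `rank A = N - N_E` such that every nonzero vector in the row span of `A` has
Hamming weight at least `N_E + 1`. Let `ι : Fin N_E → Fin N` be injective, and let
`A_E` be the `N_E × N` matrix whose `i`-th row is the standard basis vector `e_{ι i}`.
Then the linear map `x ↦ (A ⬝ x, A_E ⬝ x)` from `F^N` to `F^{N-N_E} × F^{N_E}`
is bijective. -/
theorem stmt_3 (F : Type*) [Field F] [DecidableEq F] (N NE : ℕ) (hNE : NE ≤ N)
    (A : Matrix (Fin (N - NE)) (Fin N) F) (hA : A.rank = N - NE)
    (hMDS : ∀ v ∈ Submodule.span F (Set.range A), v ≠ 0 → NE + 1 ≤ hammingNorm v)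
    (ι : Fin NE → Fin N) (hι : Function.Injective ι)
    (AE : Matrix (Fin NE) (Fin N) F)
    (hAE : ∀ i, AE i = Pi.single (ι i) 1) :
    Function.Bijective (fun x : Fin N → F => (A.mulVec x, AE.mulVec x)) := by
  set b : Fin NE → Fin N → F := fun i => Pi.single (ι i) 1 with hb
  -- rows of A are independent
  have hAind : LinearIndependent F A := by
    apply linearIndependent_iff_card_eq_finrank_span.mpr
    rw [Set.finrank]
    change _ = Module.finrank F (Submodule.span F (Set.range A.row))
    rw [← Matrix.rank_eq_finrank_span_row, hA, Fintype.card_fin]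
  have hbind : LinearIndependent F b := by
    have := (Pi.basisFun F (Fin N)).linearIndependent.comp ι hι
    convert this using 1
    funext i
    simp [b, Pi.basisFun_apply]
  -- any element of span of b has small hamming norm
  have hsmall : ∀ v ∈ Submodule.span F (Set.range b), hammingNorm v ≤ NE := by
    intro v hv
    rw [mem_span_range_iff_exists_fun] at hv
    obtain ⟨c, hc⟩ := hv
    have hsupp : (Finset.univ.filter fun j => v j ≠ 0) ⊆ Finset.univ.image ι := by
      intro j hj
      simp only [Finset.mem_filter, ne_eq] at hj
      by_contra hjim
      simp only [Finset.mem_image, Finset.mem_univ, true_and] at hjim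
      apply hj.2
      rw [← hc]
      simp only [Finset.sum_apply, Pi.smul_apply, b]
      apply Finset.sum_eq_zero
      intro i _
      rw [Pi.single_apply]
      simp only [smul_eq_mul]
      rw [if_neg (fun h => hjim ⟨i, h.symm⟩)]
      simp
    calc hammingNorm v = (Finset.univ.filter fun j => v j ≠ 0).card := rfl
      _ ≤ (Finset.univ.image ι).card := Finset.card_le_card hsupp
      _ ≤ Finset.univ.card * 1 := by rw [mul_one]; exact Finset.card_image_le
      _ = NE := by simp
  have hdisj : Disjoint (Submodule.span F (Set.range A)) (Submodule.span F (Set.range b)) := by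
    rw [disjoint_def]
    intro v hvA hvb
    by_contra hv0
    exact absurd (hMDS v hvA hv0) (by simpa using (hsmall v hvb).trans_lt (Nat.lt_succ_self NE))
  have hsumind : LinearIndependent F (Sum.elim A b) :=
    linearIndependent_sum.mpr ⟨hAind, hbind, hdisj⟩
  have hcard : Fintype.card (Fin (N - NE) ⊕ Fin NE) = Module.finrank F (Fin N → F) := by
    simp; omega
  have htop : Submodule.span F (Set.range (Sum.elim A b)) = ⊤ := by
    apply Submodule.eq_top_of_finrank_eq
    rw [finrank_span_eq_card hsumind, hcard]
  -- injectivity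
  let L : (Fin N → F) →ₗ[F] (Fin (N - NE) → F) × (Fin NE → F) :=
    (A.mulVecLin).prod (AE.mulVecLin)
  have hLinj : Function.Injective L := by
    rw [← LinearMap.ker_eq_bot, Submodule.eq_bot_iff]
    rintro x hx
    simp only [LinearMap.mem_ker, L, LinearMap.prod_apply, Function.prod, Prod.mk_eq_zero,
      Matrix.mulVecLin_apply] at hx
    let φ : (Fin N → F) →ₗ[F] F :=
      { toFun := fun v => dotProduct v x
        map_add' := fun a b => add_dotProduct a b x
        map_smul' := fun c a => smul_dotProduct c a x }
    have hφ : ∀ v, φ v = 0 := by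
      intro v
      have hv : v ∈ Submodule.span F (Set.range (Sum.elim A b)) := htop ▸ Submodule.mem_top
      induction hv using Submodule.span_induction with
      | mem w hw =>
        obtain ⟨i, rfl⟩ := hw
        cases i with
        | inl i =>
          have := congrFun hx.1 i
          show dotProduct (A i) x = 0
          simpa [Matrix.mulVec] using this
        | inr i =>
          have := congrFun hx.2 i
          have h2 : dotProduct (AE i) x = 0 := by simpa [Matrix.mulVec] using this
          rw [hAE i] at h2
          show dotProduct (Pi.single (ι i) 1) x = 0
          simpa [φ, b] using h2
      | zero => simp [φ]
      | add w₁ w₂ _ _ h1 h2 => rw [map_add, h1, h2, add_zero]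
      | smul c w _ h => rw [map_smul, h, smul_zero]
    funext j
    have := hφ (Pi.single j 1)
    simpa [φ, single_dotProduct] using this
  have hfr : Module.finrank F (Fin N → F) =
      Module.finrank F ((Fin (N - NE) → F) × (Fin NE → F)) := by
    simp; omega
  have hLsurj : Function.Surjective L :=
    (LinearMap.injective_iff_surjective_of_finrank_eq_finrank hfr).mp hLinj
  exact ⟨hLinj, hLsurj⟩
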